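/- arXiv:1309.6710 — 4 statements merged into one kernel-verified Lean document; each statement's English description precedes it below -/
import Mathlib

section
/- The number of labeled trees on n vertices (n ≥ 2) in which vertex j has degree δ_j for each j equals the multinomial coefficient (n-2)! / ∏_{j=1}^n (δ_j - 1)!, provided each δ_j ≥ 1 and ∑_j δ_j = 2(n-1). -/
open SimpleGraph
set_option linter.unusedSectionVars false
namespace TreeCount
variable {V : Type} [DecidableEq V] {v u₀ : V}





/-- Restrict a walk avoiding `v` to a graph on the subtype `{x // x ≠ v}`. -/
def restrictWalk {G : SimpleGraph V} {H : SimpleGraph {x : V // x ≠ v}}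
    (hadj : ∀ a b (ha : a ≠ v) (hb : b ≠ v), G.Adj a b → H.Adj ⟨a, ha⟩ ⟨b, hb⟩) :
    ∀ {x y : V} (w : G.Walk x y) (hx : x ≠ v) (hy : y ≠ v),
      (∀ z ∈ w.support, z ≠ v) → H.Walk ⟨x, hx⟩ ⟨y, hy⟩
  | _, _, SimpleGraph.Walk.nil, _, _, _ => SimpleGraph.Walk.nil
  | _, _, SimpleGraph.Walk.cons h p, hx, hy, hs =>
      SimpleGraph.Walk.cons
        (hadj _ _ hx (hs _ (by simp)) h)
        (restrictWalk hadj p (hs _ (by simp)) hy (fun z hz => hs z (by simp [hz])))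

lemma restrictWalk_support {G : SimpleGraph V} {H : SimpleGraph {x : V // x ≠ v}}
    (hadj : ∀ a b (ha : a ≠ v) (hb : b ≠ v), G.Adj a b → H.Adj ⟨a, ha⟩ ⟨b, hb⟩) :
    ∀ {x y : V} (w : G.Walk x y) (hx : x ≠ v) (hy : y ≠ v)
      (hs : ∀ z ∈ w.support, z ≠ v),
      (restrictWalk hadj w hx hy hs).support.map Subtype.val = w.support
  | _, _, SimpleGraph.Walk.nil, _, _, _ => by simp [restrictWalk]
  | _, _, SimpleGraph.Walk.cons h p, hx, hy, hs => by
      simp [restrictWalk, restrictWalk_support]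

lemma restrictWalk_edges {G : SimpleGraph V} {H : SimpleGraph {x : V // x ≠ v}}
    (hadj : ∀ a b (ha : a ≠ v) (hb : b ≠ v), G.Adj a b → H.Adj ⟨a, ha⟩ ⟨b, hb⟩) :
    ∀ {x y : V} (w : G.Walk x y) (hx : x ≠ v) (hy : y ≠ v)
      (hs : ∀ z ∈ w.support, z ≠ v),
      (restrictWalk hadj w hx hy hs).edges.map (Sym2.map Subtype.val) = w.edges
  | _, _, SimpleGraph.Walk.nil, _, _, _ => by simp [restrictWalk]
  | _, _, SimpleGraph.Walk.cons h p, hx, hy, hs => by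
      simp [restrictWalk, restrictWalk_edges]

lemma restrictWalk_length {G : SimpleGraph V} {H : SimpleGraph {x : V // x ≠ v}}
    (hadj : ∀ a b (ha : a ≠ v) (hb : b ≠ v), G.Adj a b → H.Adj ⟨a, ha⟩ ⟨b, hb⟩) :
    ∀ {x y : V} (w : G.Walk x y) (hx : x ≠ v) (hy : y ≠ v)
      (hs : ∀ z ∈ w.support, z ≠ v),
      (restrictWalk hadj w hx hy hs).length = w.length
  | _, _, SimpleGraph.Walk.nil, _, _, _ => by simp [restrictWalk]
  | _, _, SimpleGraph.Walk.cons h p, hx, hy, hs => by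
      simp [restrictWalk, restrictWalk_length]



/-- If `v` has unique neighbor `u₀`, no cycle passes through `v`. -/
lemma not_mem_cycle_support {G : SimpleGraph V} (hu : G.neighborSet v = {u₀})
    {w : V} {c : G.Walk w w} (hc : c.IsCycle) : v ∉ c.support := by
  intro hv
  have hc' : (c.rotate v hv).IsCycle := hc.rotate hv
  obtain ⟨x, hvx, q, hq⟩ := SimpleGraph.Walk.not_nil_iff.mp hc'.not_nil
  -- q : Walk x v
  have hxv : x ≠ v := hvx.ne'
  have hq' : q.IsPath ∧ s(v, x) ∉ q.edges := by
    rw [← SimpleGraph.Walk.cons_isCycle_iff]; rwa [← hq]; exact hvx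
  -- last step of q : there is y with Adj v y and s(v,y) ∈ q.edges
  obtain ⟨y, hvy, r, hr⟩ := SimpleGraph.Walk.exists_eq_cons_of_ne (fun h => hxv h.symm) q.reverse
  have hy : s(v, y) ∈ q.edges := by
    have : s(v, y) ∈ q.reverse.edges := by rw [hr]; simp
    rwa [SimpleGraph.Walk.edges_reverse, List.mem_reverse] at this
  have hxy : x ≠ y := by
    rintro rfl; exact hq'.2 hy
  have hx1 : x = u₀ := by
    have : x ∈ G.neighborSet v := hvx
    rw [hu] at this; exact this
  have hy1 : y = u₀ := by
    have : y ∈ G.neighborSet v := hvy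
    rw [hu] at this; exact this
  exact hxy (hx1.trans hy1.symm)

/-- If `v` has unique neighbor `u₀`, `v` is not an interior vertex of any path. -/
lemma not_mem_path_support {G : SimpleGraph V} (hu : G.neighborSet v = {u₀})
    {x y : V} {p : G.Walk x y} (hp : p.IsPath) (hx : x ≠ v) (hy : y ≠ v) :
    v ∉ p.support := by
  intro hv
  have hsplit := p.take_spec hv
  set t := p.takeUntil v hv with ht
  set d := p.dropUntil v hv with hd
  -- t : Walk x v, d : Walk v y
  obtain ⟨a, hva, r, hr⟩ := SimpleGraph.Walk.exists_eq_cons_of_ne (fun h => hx h.symm) t.reverse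
  obtain ⟨b, hvb, s, hs⟩ := SimpleGraph.Walk.exists_eq_cons_of_ne (fun h => hy h.symm) d
  have ha : a ∈ t.support := by
    have : a ∈ t.reverse.support := by rw [hr]; simp
    rwa [SimpleGraph.Walk.support_reverse, List.mem_reverse] at this
  have hb : b ∈ d.support.tail := by
    rw [hs]; simp [SimpleGraph.Walk.support_cons]
  have hnd : p.support.Nodup := hp.support_nodup
  rw [← hsplit, SimpleGraph.Walk.support_append, List.nodup_append] at hnd
  have hab : a ≠ b := fun h => hnd.2.2 a ha b hb h
  have ha1 : a = u₀ := by have : a ∈ G.neighborSet v := hva; rw [hu] at this; exact this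
  have hb1 : b = u₀ := by have : b ∈ G.neighborSet v := hvb; rw [hu] at this; exact this
  exact hab (ha1.trans hb1.symm)



/-- Delete the vertex `v`. -/
def del (G : SimpleGraph V) (v : V) : SimpleGraph {x : V // x ≠ v} :=
  G.comap Subtype.val

@[simp] lemma del_adj {G : SimpleGraph V} {a b : {x : V // x ≠ v}} :
    (del G v).Adj a b ↔ G.Adj a.1 b.1 := Iff.rfl

/-- Attach a leaf `v` to the vertex `u` of a graph on `{x // x ≠ v}`. -/
def ext' (H : SimpleGraph {x : V // x ≠ v}) (u : {x : V // x ≠ v}) : SimpleGraph V where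
  Adj a b := (∃ (ha : a ≠ v) (hb : b ≠ v), H.Adj ⟨a, ha⟩ ⟨b, hb⟩) ∨
    (a = v ∧ b = u.1) ∨ (b = v ∧ a = u.1)
  symm := by
    refine ⟨?_⟩; rintro a b (⟨ha, hb, h⟩ | ⟨rfl, rfl⟩ | ⟨rfl, rfl⟩)
    · exact Or.inl ⟨hb, ha, h.symm⟩
    · exact Or.inr (Or.inr ⟨rfl, rfl⟩)
    · exact Or.inr (Or.inl ⟨rfl, rfl⟩)
  loopless := by
    refine ⟨?_⟩; rintro a (⟨ha, hb, h⟩ | ⟨rfl, h⟩ | ⟨rfl, h⟩)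
    · exact H.loopless.irrefl _ h
    · exact u.2 h.symm
    · exact u.2 h.symm

lemma ext'_adj {H : SimpleGraph {x : V // x ≠ v}} {u : {x : V // x ≠ v}} {a b : V} :
    (ext' H u).Adj a b ↔ (∃ (ha : a ≠ v) (hb : b ≠ v), H.Adj ⟨a, ha⟩ ⟨b, hb⟩) ∨
      (a = v ∧ b = u.1) ∨ (b = v ∧ a = u.1) := Iff.rfl

@[simp] lemma ext'_neighborSet_v {H : SimpleGraph {x : V // x ≠ v}} {u : {x : V // x ≠ v}} :
    (ext' H u).neighborSet v = {u.1} := by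
  ext b
  rw [Set.mem_singleton_iff, mem_neighborSet, ext'_adj]
  constructor
  · rintro (⟨ha, _, _⟩ | ⟨_, rfl⟩ | ⟨rfl, hb⟩)
    · exact absurd rfl ha
    · rfl
    · exact absurd hb.symm u.2
  · rintro rfl; exact Or.inr (Or.inl ⟨rfl, rfl⟩)

lemma ext'_neighborSet_ne {H : SimpleGraph {x : V // x ≠ v}} {u : {x : V // x ≠ v}}
    (a : {x : V // x ≠ v}) :
    (ext' H u).neighborSet a.1 =
      Subtype.val '' (H.neighborSet a) ∪ (if a = u then {v} else ∅) := by
  ext b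
  simp only [mem_neighborSet, ext'_adj, Set.mem_union, Set.mem_image]
  constructor
  · rintro (⟨ha, hb, h⟩ | ⟨hav, _⟩ | ⟨rfl, hb⟩)
    · exact Or.inl ⟨⟨b, hb⟩, by simpa [Subtype.ext_iff, ha] using h, rfl⟩
    · exact absurd hav a.2
    · refine Or.inr ?_
      have : a = u := Subtype.ext hb
      simp [this]
  · rintro (⟨⟨b', hb'⟩, h, rfl⟩ | hb)
    · exact Or.inl ⟨a.2, hb', by simpa using h⟩
    · by_cases hau : a = u
      · simp only [hau, if_pos rfl, Set.mem_singleton_iff] at hb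
        subst hb; exact Or.inr (Or.inr ⟨rfl, by rw [hau]⟩)
      · simp [hau] at hb

/-- The graph hom from `H` into `ext' H u`. -/
def ext'Hom (H : SimpleGraph {x : V // x ≠ v}) (u : {x : V // x ≠ v}) :
    H →g ext' H u where
  toFun := Subtype.val
  map_rel' := fun {a b} h => Or.inl ⟨a.2, b.2, by simpa using h⟩



lemma restrictWalk_isCycle {G : SimpleGraph V} {H : SimpleGraph {x : V // x ≠ v}}
    (hadj : ∀ a b (ha : a ≠ v) (hb : b ≠ v), G.Adj a b → H.Adj ⟨a, ha⟩ ⟨b, hb⟩)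
    {x : V} {c : G.Walk x x} (hx : x ≠ v) (hs : ∀ z ∈ c.support, z ≠ v)
    (hc : c.IsCycle) : (restrictWalk hadj c hx hx hs).IsCycle := by
  rw [SimpleGraph.Walk.isCycle_def]
  refine ⟨⟨?_⟩, ?_, ?_⟩
  · have := restrictWalk_edges hadj c hx hx hs
    have hnd : c.edges.Nodup := hc.edges_nodup
    rw [← this] at hnd
    exact hnd.of_map _
  · intro hnil
    have hl := restrictWalk_length hadj c hx hx hs
    have h3 := hc.three_le_length
    rw [← hl, hnil] at h3
    simp at h3
  · have hsupp := restrictWalk_support hadj c hx hx hs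
    have hnd : c.support.tail.Nodup := hc.support_nodup
    rw [← hsupp, ← List.map_tail] at hnd
    exact hnd.of_map _

lemma del_isTree {G : SimpleGraph V} {u₀ : V} (hG : G.IsTree)
    (hu : G.neighborSet v = {u₀}) : (del G v).IsTree := by
  have hu₀v : u₀ ≠ v := by
    have : u₀ ∈ G.neighborSet v := by rw [hu]; rfl
    exact (G.ne_of_adj this).symm
  constructor
  · rw [connected_iff]
    refine ⟨?_, ?_⟩
    · intro x y
      have hr : G.Reachable x.1 y.1 := hG.isConnected.preconnected x.1 y.1
      refine hr.elim_path fun p => ?_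
      have hv : v ∉ (p : G.Walk x.1 y.1).support :=
        not_mem_path_support hu p.2 x.2 y.2
      exact (restrictWalk (fun a b ha hb h => h) (p : G.Walk x.1 y.1) x.2 y.2
        (fun z hz => fun hzv => hv (hzv ▸ hz))).reachable
    · exact ⟨⟨u₀, hu₀v⟩⟩
  · intro a c hc
    have : (c.map (⟨Subtype.val, fun {x y} h => h⟩ : del G v →g G)).IsCycle :=
      hc.map Subtype.val_injective
    exact hG.IsAcyclic _ this

lemma ext'_isTree {H : SimpleGraph {x : V // x ≠ v}} {u : {x : V // x ≠ v}}
    (hH : H.IsTree) : (ext' H u).IsTree := by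
  constructor
  · rw [connected_iff]
    refine ⟨?_, ?_⟩
    · have hv : ∀ x : V, (ext' H u).Reachable x v := by
        intro x
        by_cases hx : x = v
        · subst hx; rfl
        · have hr : H.Reachable ⟨x, hx⟩ u := hH.isConnected.preconnected _ _
          obtain ⟨w⟩ := hr
          have : (ext' H u).Reachable x u.1 := (w.map (ext'Hom H u)).reachable
          exact this.trans (Adj.reachable (by
            exact Or.inr (Or.inr ⟨rfl, rfl⟩)))
      intro x y
      exact (hv x).trans (hv y).symm
    · exact ⟨v⟩
  · intro a c hc
    by_cases hv : v ∈ c.support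
    · exact not_mem_cycle_support ext'_neighborSet_v hc hv
    · have ha : a ≠ v := fun h => hv (h ▸ c.start_mem_support)
      have hs : ∀ z ∈ c.support, z ≠ v := fun z hz hzv => hv (hzv ▸ hz)
      have hadj : ∀ a b (ha : a ≠ v) (hb : b ≠ v),
          (ext' H u).Adj a b → H.Adj ⟨a, ha⟩ ⟨b, hb⟩ := by
        rintro a b ha' hb' (⟨ha2, hb2, h⟩ | ⟨rfl, _⟩ | ⟨rfl, _⟩)
        · convert h using 2
        · exact absurd rfl ha'
        · exact absurd rfl hb'
      exact hH.IsAcyclic _ (restrictWalk_isCycle hadj ha hs hc)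



section WithFintype
variable [Fintype V]

lemma del_deg {G : SimpleGraph V} (hu : G.neighborSet v = {u₀}) (j : {x : V // x ≠ v}) :
    ((del G v).neighborSet j).ncard =
      (G.neighborSet j.1).ncard - (if j.1 = u₀ then 1 else 0) := by
  have himg : Subtype.val '' ((del G v).neighborSet j) = G.neighborSet j.1 \ {v} := by
    ext b
    simp only [Set.mem_image, mem_neighborSet, del_adj, Set.mem_diff, Set.mem_singleton_iff]
    constructor
    · rintro ⟨⟨b', hb'⟩, h, rfl⟩; exact ⟨h, hb'⟩
    · rintro ⟨h, hb⟩; exact ⟨⟨b, hb⟩, h, rfl⟩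
  have hcard := Set.ncard_image_of_injective ((del G v).neighborSet j) Subtype.val_injective
  rw [himg] at hcard
  rw [← hcard]
  by_cases hj : j.1 = u₀
  · rw [if_pos hj]
    have hv : v ∈ G.neighborSet j.1 := by
      have : j.1 ∈ G.neighborSet v := by rw [hu, hj]; rfl
      exact this.symm
    exact Set.ncard_diff_singleton_of_mem hv
  · rw [if_neg hj]
    have hv : v ∉ G.neighborSet j.1 := by
      intro h
      have : j.1 ∈ G.neighborSet v := h.symm
      rw [hu] at this
      exact hj this
    rw [Set.diff_singleton_eq_self hv, Nat.sub_zero]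

lemma ext'_deg {H : SimpleGraph {x : V // x ≠ v}} {u : {x : V // x ≠ v}}
    (a : {x : V // x ≠ v}) :
    ((ext' H u).neighborSet a.1).ncard =
      (H.neighborSet a).ncard + (if a = u then 1 else 0) := by
  rw [ext'_neighborSet_ne]
  have himg : (Subtype.val '' (H.neighborSet a)).ncard = (H.neighborSet a).ncard :=
    Set.ncard_image_of_injective _ Subtype.val_injective
  by_cases hau : a = u
  · rw [if_pos hau, if_pos hau]
    rw [Set.union_singleton, Set.ncard_insert_of_notMem (by
      rintro ⟨b, _, hb⟩; exact b.2 hb), himg]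
  · rw [if_neg hau, if_neg hau, Set.union_empty, himg, Nat.add_zero]

lemma del_ext' {H : SimpleGraph {x : V // x ≠ v}} {u : {x : V // x ≠ v}} :
    del (ext' H u) v = H := by
  ext a b
  simp only [del_adj, ext'_adj]
  constructor
  · rintro (⟨ha, hb, h⟩ | ⟨hav, _⟩ | ⟨hbv, _⟩)
    · convert h using 2
    · exact absurd hav a.2
    · exact absurd hbv b.2
  · intro h
    exact Or.inl ⟨a.2, b.2, by simpa using h⟩

lemma ext'_del {G : SimpleGraph V} (hu : G.neighborSet v = {u₀}) (hu₀ : u₀ ≠ v) :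
    ext' (del G v) ⟨u₀, hu₀⟩ = G := by
  ext a b
  simp only [ext'_adj, del_adj]
  constructor
  · rintro (⟨ha, hb, h⟩ | ⟨hav, hbu⟩ | ⟨hbv, hau⟩)
    · exact h
    · have h2 : u₀ ∈ G.neighborSet v := by rw [hu]; rfl
      rw [hav, hbu]; exact h2
    · have h2 : u₀ ∈ G.neighborSet v := by rw [hu]; rfl
      rw [hbv, hau]; exact h2.symm
  · intro h
    by_cases ha : a = v
    · subst ha
      have : b ∈ G.neighborSet a := h
      rw [hu] at this
      exact Or.inr (Or.inl ⟨rfl, this⟩)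
    · by_cases hb : b = v
      · subst hb
        have : a ∈ G.neighborSet b := h.symm
        rw [hu] at this
        exact Or.inr (Or.inr ⟨rfl, this⟩)
      · exact Or.inl ⟨ha, hb, h⟩


lemma card_step [Fintype V] (δ : V → ℕ) (hδv : δ v = 1) (hpos : ∀ j, 1 ≤ δ j) :
    Nat.card {G : SimpleGraph V // G.IsTree ∧ ∀ j, (G.neighborSet j).ncard = δ j} =
    ∑ u : {x : V // x ≠ v}, Nat.card {H : SimpleGraph {x : V // x ≠ v} //
      H.IsTree ∧ ∀ j, (H.neighborSet j).ncard = if j = u then δ j.1 - 1 else δ j.1} := by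
  classical
  have hΦ : ∀ (u : {x : V // x ≠ v}) (H : SimpleGraph {x : V // x ≠ v}),
      H.IsTree → (∀ j, (H.neighborSet j).ncard = if j = u then δ j.1 - 1 else δ j.1) →
      (ext' H u).IsTree ∧ ∀ j, ((ext' H u).neighborSet j).ncard = δ j := by
    intro u H hT hdeg
    refine ⟨ext'_isTree hT, fun j => ?_⟩
    by_cases hj : j = v
    · subst hj
      rw [ext'_neighborSet_v, Set.ncard_singleton, hδv]
    · have := ext'_deg (H := H) (u := u) ⟨j, hj⟩
      rw [this, hdeg ⟨j, hj⟩]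
      by_cases hju : (⟨j, hj⟩ : {x : V // x ≠ v}) = u
      · rw [if_pos hju, if_pos hju, Nat.sub_add_cancel (hpos j)]
      · rw [if_neg hju, if_neg hju, Nat.add_zero]
  let Φ : (Σ u : {x : V // x ≠ v}, {H : SimpleGraph {x : V // x ≠ v} //
        H.IsTree ∧ ∀ j, (H.neighborSet j).ncard = if j = u then δ j.1 - 1 else δ j.1}) →
      {G : SimpleGraph V // G.IsTree ∧ ∀ j, (G.neighborSet j).ncard = δ j} :=
    fun p => ⟨ext' p.2.1 p.1, hΦ p.1 p.2.1 p.2.2.1 p.2.2.2⟩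
  have hbij : Function.Bijective Φ := by
    constructor
    · rintro ⟨u, H, hH⟩ ⟨u', H', hH'⟩ h
      have hG : ext' H u = ext' H' u' := congrArg Subtype.val h
      have huu : u = u' := by
        have := congrArg (fun G => SimpleGraph.neighborSet G v) hG
        simp only [ext'_neighborSet_v] at this
        exact Subtype.ext (Set.singleton_eq_singleton_iff.mp this)
      subst huu
      have hHH : H = H' := by
        have h2 : del (ext' H u) v = del (ext' H' u) v := congrArg (fun G => del G v) hG
        rwa [del_ext', del_ext'] at h2
      subst hHH
      rfl
    · rintro ⟨G, hT, hdeg⟩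
      have h1 : (G.neighborSet v).ncard = 1 := by rw [hdeg v, hδv]
      obtain ⟨u₀, hu⟩ := Set.ncard_eq_one.mp h1
      have hu₀v : u₀ ≠ v := by
        have : u₀ ∈ G.neighborSet v := by rw [hu]; rfl
        exact (G.ne_of_adj this).symm
      have hdegs : ∀ j : {x : V // x ≠ v}, ((del G v).neighborSet j).ncard =
          if j = ⟨u₀, hu₀v⟩ then δ j.1 - 1 else δ j.1 := by
        intro j
        rw [del_deg hu j, hdeg j.1]
        by_cases hj : j = ⟨u₀, hu₀v⟩
        · rw [if_pos hj, if_pos (by rw [hj])]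
        · rw [if_neg hj, if_neg (fun h => hj (Subtype.ext h)), Nat.sub_zero]
      refine ⟨⟨⟨u₀, hu₀v⟩, ⟨del G v, del_isTree hT hu, hdegs⟩⟩, ?_⟩
      exact Subtype.ext (ext'_del hu hu₀v)
  rw [← Nat.card_eq_of_bijective Φ hbij, Nat.card_eq_fintype_card, Fintype.card_sigma]
  exact Finset.sum_congr rfl fun u _ => Nat.card_eq_fintype_card.symm


lemma one_le_deg [Fintype V] {G : SimpleGraph V} (hG : G.Connected)
    (h2 : 2 ≤ Fintype.card V) (x : V) : 1 ≤ (G.neighborSet x).ncard := by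
  obtain ⟨y, hy⟩ := Fintype.exists_ne_of_one_lt_card (by omega) x
  obtain ⟨w⟩ := hG.preconnected x y
  obtain ⟨z, hz, q, _⟩ := SimpleGraph.Walk.exists_eq_cons_of_ne (Ne.symm hy) w
  exact (Set.ncard_pos (Set.toFinite _)).mpr ⟨z, hz⟩

lemma card_empty_of_deg_zero [Fintype V] {δ : V → ℕ} {u : V} (hu : δ u = 0)
    (h2 : 2 ≤ Fintype.card V) :
    Nat.card {G : SimpleGraph V // G.IsTree ∧ ∀ j, (G.neighborSet j).ncard = δ j} = 0 := by
  rw [Nat.card_eq_zero]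
  left
  constructor
  rintro ⟨G, hT, hdeg⟩
  have := one_le_deg hT.isConnected h2 u
  rw [hdeg u, hu] at this
  omega

lemma top_isTree [Fintype V] (h2 : Fintype.card V = 2) : (⊤ : SimpleGraph V).IsTree := by
  constructor
  · rw [connected_iff]
    refine ⟨fun x y => ?_, ?_⟩
    · by_cases hxy : x = y
      · subst hxy; rfl
      · exact SimpleGraph.Adj.reachable (by simp [hxy])
    · have : 0 < Fintype.card V := by omega
      exact Fintype.card_pos_iff.mp this
  · intro a c hc
    have h3 := hc.three_le_length
    have hnd : c.support.tail.Nodup := hc.support_nodup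
    have hlen : c.support.tail.length = c.length := by
      have := SimpleGraph.Walk.length_support c
      simp [List.length_tail, this]
    have := hnd.length_le_card
    rw [hlen, h2] at this
    omega

lemma card_base [Fintype V] (h2 : Fintype.card V = 2) (δ : V → ℕ) (hδ : ∀ j, δ j = 1) :
    Nat.card {G : SimpleGraph V // G.IsTree ∧ ∀ j, (G.neighborSet j).ncard = δ j} = 1 := by
  have hkey : ∀ b c : V, ∀ a : V, b ≠ a → c ≠ a → b = c := by
    intro b c a hb hc
    by_contra hbc
    have hcard : ({a, b, c} : Finset V).card ≤ 2 := h2 ▸ Finset.card_le_univ _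
    rw [Finset.card_insert_of_notMem (by simp [Ne.symm hb, Ne.symm hc]),
      Finset.card_insert_of_notMem (by simp [hbc])] at hcard
    simp at hcard
  have hdeg_top : ∀ j : V, ((⊤ : SimpleGraph V).neighborSet j).ncard = δ j := by
    intro j
    have hset : (⊤ : SimpleGraph V).neighborSet j = ({j} : Set V)ᶜ := by
      ext b; simp [SimpleGraph.top_adj, ne_comm]
    have := Set.ncard_add_ncard_compl ({j} : Set V) (Set.toFinite _) (Set.toFinite _)
    rw [Set.ncard_singleton, Nat.card_eq_fintype_card, h2] at this
    rw [hset, hδ j]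
    omega
  have htop_eq : ∀ G : SimpleGraph V, G.IsTree → G = ⊤ := by
    intro G hT
    ext a b
    simp only [SimpleGraph.top_adj]
    constructor
    · exact fun h => h.ne
    · intro hab
      obtain ⟨w⟩ := hT.isConnected.preconnected a b
      obtain ⟨z, hz, q, _⟩ := SimpleGraph.Walk.exists_eq_cons_of_ne hab w
      have : z = b := hkey z b a hz.ne' hab.symm
      rwa [this] at hz
  rw [Nat.card_eq_one_iff_unique]
  constructor
  · constructor
    rintro ⟨G, hT, _⟩ ⟨G', hT', _⟩
    have := (htop_eq G hT).trans (htop_eq G' hT').symm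
    exact Subtype.ext this
  · exact ⟨⟨⊤, top_isTree h2, hdeg_top⟩⟩

end WithFintype

lemma aux (n : ℕ) : ∀ (V : Type) [Fintype V] [DecidableEq V] (δ : V → ℕ),
    Fintype.card V = n → 2 ≤ n → (∀ j, 1 ≤ δ j) → (∑ j, δ j = 2 * (n - 1)) →
    Nat.card {G : SimpleGraph V // G.IsTree ∧ ∀ j, (G.neighborSet j).ncard = δ j} *
      ∏ j, (δ j - 1).factorial = (n - 2).factorial := by
  induction n using Nat.strong_induction_on with
  | _ n IH =>
    intro V _ _ δ hcard hn hpos hsum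
    by_cases hn2 : n = 2
    · -- base case
      subst hn2
      have h1 : ∑ j, ((δ j - 1) + 1) = ∑ j, δ j :=
        Finset.sum_congr rfl fun j _ => Nat.sub_add_cancel (hpos j)
      rw [Finset.sum_add_distrib, Finset.sum_const, Finset.card_univ, hcard, hsum,
        smul_eq_mul, mul_one] at h1
      have h0 : ∑ j, (δ j - 1) = 0 := by omega
      have hδ1 : ∀ j, δ j = 1 := by
        intro j
        have := (Finset.sum_eq_zero_iff.mp h0) j (Finset.mem_univ j)
        have := hpos j
        omega
      rw [card_base hcard δ hδ1]
      have : ∏ j, (δ j - 1).factorial = 1 := by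
        apply Finset.prod_eq_one
        intro j _
        simp [hδ1 j]
      rw [this]
      rfl
    · -- inductive step; n ≥ 3
      have hn3 : 3 ≤ n := by omega
      -- find a leaf value
      have hex : ∃ v, δ v = 1 := by
        by_contra hno
        push_neg at hno
        have h2 : ∀ j, 2 ≤ δ j := fun j => by
          have := hpos j; have := hno j; omega
        have : (2 : ℕ) * n ≤ ∑ j, δ j := by
          calc (2 : ℕ) * n = ∑ _j : V, 2 := by
                rw [Finset.sum_const, Finset.card_univ, hcard]; ring
            _ ≤ ∑ j, δ j := Finset.sum_le_sum fun j _ => h2 j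
        omega
      obtain ⟨v, hδv⟩ := hex
      have hSmem : ∀ x : V, x ∈ (Finset.univ.erase v) ↔ x ≠ v := by
        intro x; simp
      have hScard : Fintype.card {x : V // x ≠ v} = n - 1 := by
        rw [Fintype.card_subtype]
        rw [show (Finset.univ.filter fun x => x ≠ v) = Finset.univ.erase v by
          ext x; simp [Finset.mem_erase, and_comm]]
        rw [Finset.card_erase_of_mem (Finset.mem_univ v), Finset.card_univ, hcard]
      -- sum over the subtype
      have hsumS : ∑ j : {x : V // x ≠ v}, δ j.1 = 2 * (n - 1) - 1 := by
        have h1 : ∑ j ∈ Finset.univ.erase v, δ j = ∑ j : {x : V // x ≠ v}, δ j.1 :=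
          (Finset.sum_subtype _ hSmem δ)
        have h2 : δ v + ∑ j ∈ Finset.univ.erase v, δ j = ∑ j, δ j :=
          Finset.add_sum_erase _ δ (Finset.mem_univ v)
        rw [hsum, hδv] at h2
        omega
      rw [card_step (v := v) δ hδv hpos, Finset.sum_mul]
      -- per-u term
      have hterm : ∀ u : {x : V // x ≠ v},
          Nat.card {H : SimpleGraph {x : V // x ≠ v} //
              H.IsTree ∧ ∀ j, (H.neighborSet j).ncard = if j = u then δ j.1 - 1 else δ j.1} *
            ∏ j, (δ j - 1).factorial = (δ u.1 - 1) * (n - 3).factorial := by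
        intro u
        set δu : {x : V // x ≠ v} → ℕ := fun j => if j = u then δ j.1 - 1 else δ j.1 with hδu
        -- product over V vs over S
        have hprodV : ∏ j, (δ j - 1).factorial = ∏ j : {x : V // x ≠ v}, (δ j.1 - 1).factorial := by
          have h1 : ∏ j ∈ Finset.univ.erase v, (δ j - 1).factorial
              = ∏ j : {x : V // x ≠ v}, (δ j.1 - 1).factorial :=
            Finset.prod_subtype _ hSmem _
          have h2 : (δ v - 1).factorial * ∏ j ∈ Finset.univ.erase v, (δ j - 1).factorial
              = ∏ j, (δ j - 1).factorial :=
            Finset.mul_prod_erase _ (fun j => (δ j - 1).factorial) (Finset.mem_univ v)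
          rw [hδv] at h2
          simp only [show (1:ℕ) - 1 = 0 from rfl, Nat.factorial_zero, one_mul] at h2
          exact h2.symm.trans h1
        by_cases hu2 : 2 ≤ δ u.1
        · -- apply the induction hypothesis
          have hposS : ∀ j, 1 ≤ δu j := by
            intro j
            by_cases hju : j = u
            · simp [hδu, hju]; omega
            · simp [hδu, hju]; exact hpos j.1
          have hsum' : ∑ j : {x : V // x ≠ v}, δu j = 2 * ((n - 1) - 1) := by
            have h1 : δu u + ∑ j ∈ Finset.univ.erase u, δu j = ∑ j, δu j :=
              Finset.add_sum_erase _ δu (Finset.mem_univ u)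
            have h2 : ∑ j ∈ Finset.univ.erase u, δu j = ∑ j ∈ Finset.univ.erase u, δ j.1 :=
              Finset.sum_congr rfl fun j hj => by
                simp [hδu, (Finset.mem_erase.mp hj).1]
            have h3 : δ u.1 + ∑ j ∈ Finset.univ.erase u, δ j.1
                = ∑ j : {x : V // x ≠ v}, δ j.1 :=
              Finset.add_sum_erase _ (fun j => δ j.1) (Finset.mem_univ u)
            have h4 : δu u = δ u.1 - 1 := by simp [hδu]
            rw [h2, h4] at h1
            omega
          have hIH := IH (n - 1) (by omega) {x : V // x ≠ v} δu hScard (by omega) hposS hsum'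
          have hfac : ∏ j : {x : V // x ≠ v}, (δ j.1 - 1).factorial
              = (δ u.1 - 1) * ∏ j, (δu j - 1).factorial := by
            have h1 : (δ u.1 - 1).factorial *
                ∏ j ∈ Finset.univ.erase u, (δ j.1 - 1).factorial
                = ∏ j : {x : V // x ≠ v}, (δ j.1 - 1).factorial :=
              Finset.mul_prod_erase _ (fun j => (δ j.1 - 1).factorial) (Finset.mem_univ u)
            have h2 : (δu u - 1).factorial *
                ∏ j ∈ Finset.univ.erase u, (δu j - 1).factorial
                = ∏ j, (δu j - 1).factorial :=
              Finset.mul_prod_erase _ (fun j => (δu j - 1).factorial) (Finset.mem_univ u)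
            have h3 : ∏ j ∈ Finset.univ.erase u, (δu j - 1).factorial
                = ∏ j ∈ Finset.univ.erase u, (δ j.1 - 1).factorial :=
              Finset.prod_congr rfl fun j hj => by
                simp [hδu, (Finset.mem_erase.mp hj).1]
            have h4 : (δ u.1 - 1).factorial = (δ u.1 - 1) * (δu u - 1).factorial := by
              obtain ⟨k, hk⟩ : ∃ k, δ u.1 = k + 2 := ⟨δ u.1 - 2, by omega⟩
              simp only [hδu, if_pos rfl, hk]
              norm_num [Nat.factorial_succ]
            rw [← h1, ← h2, h3, h4]
            ring
          rw [hprodV, hfac, ← mul_assoc, mul_comm _ (δ u.1 - 1), mul_assoc, hIH]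
          congr 1
        · -- δ u = 1 : empty collection
          have hu1 : δ u.1 = 1 := by have := hpos u.1; omega
          have hz : δu u = 0 := by simp [hδu, hu1]
          rw [card_empty_of_deg_zero (u := u) hz (by omega), Nat.zero_mul, hu1]
          simp
      rw [Finset.sum_congr rfl fun u _ => hterm u, ← Finset.sum_mul]
      -- ∑_{u ≠ v} (δ u - 1) = n - 2
      have hsub : ∑ u : {x : V // x ≠ v}, (δ u.1 - 1) = n - 2 := by
        have h1 : ∑ u : {x : V // x ≠ v}, ((δ u.1 - 1) + 1)
            = ∑ u : {x : V // x ≠ v}, δ u.1 :=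
          Finset.sum_congr rfl fun u _ => Nat.sub_add_cancel (hpos u.1)
        rw [Finset.sum_add_distrib, Finset.sum_const, Finset.card_univ, hScard, hsumS,
          smul_eq_mul, mul_one] at h1
        omega
      rw [hsub]
      obtain ⟨k, hk⟩ : ∃ k, n = k + 3 := ⟨n - 3, by omega⟩
      subst hk
      show (k + 1) * (k + 0).factorial = (k + 1).factorial
      simp [Nat.factorial_succ]


end TreeCount

/-- The number of labeled trees on `n ≥ 2` vertices in which vertex `j` has degree `δ j`
(for a degree sequence of positive integers summing to `2*(n-1)`) is the multinomial
coefficient `(n-2)! / ∏ j (δ j - 1)!`. -/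
theorem num_trees_with_degree_sequence (n : ℕ) (hn : 2 ≤ n) (δ : Fin n → ℕ)
    (hpos : ∀ j, 1 ≤ δ j) (hsum : ∑ j, δ j = 2 * (n - 1)) :
    Nat.card {G : SimpleGraph (Fin n) // G.IsTree ∧ ∀ j, (G.neighborSet j).ncard = δ j} =
      (n - 2).factorial / ∏ j, (δ j - 1).factorial := by
  have h := TreeCount.aux n (Fin n) δ (Fintype.card_fin n) hn hpos hsum
  have hP : 0 < ∏ j, (δ j - 1).factorial :=
    Finset.prod_pos fun j _ => Nat.factorial_pos _
  exact (Nat.div_eq_of_eq_mul_left hP h.symm).symm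
end

section
/- For integers d ≥ 3 and n ≥ 2, the sum over all degree sequences δ ∈ ℕ^n with ∑_j δ_j = 2(n-1) of ∏_{j=1}^n (d)_{δ_j} / (δ_j - 1)!, multiplied by (n-2)!, equals (n-2)! · d^n · C((d-1)n, n-2), where (d)_k denotes the falling factorial d(d-1)···(d-k+1) and C(·,·) is the binomial coefficient. -/
open Finset PowerSeries

lemma coeff_one_add_X_pow' (p k : ℕ) :
    (PowerSeries.coeff (R := ℕ) k) ((1 + PowerSeries.X) ^ p) = p.choose k := by
  rw [show (1 + PowerSeries.X : PowerSeries ℕ) = ((Polynomial.X + 1 : Polynomial ℕ) :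
        PowerSeries ℕ) by simp [add_comm],
    ← Polynomial.coe_pow, Polynomial.coeff_coe, Polynomial.coeff_X_add_one_pow, Nat.cast_id]

lemma vander (m n k : ℕ) :
    ∑ l ∈ Finset.finsuppAntidiag (Finset.univ : Finset (Fin n)) k,
        ∏ i, m.choose (l i) = (m * n).choose k := by
  have h := PowerSeries.coeff_prod
    (fun _ : Fin n => ((1 + PowerSeries.X : PowerSeries ℕ) ^ m)) k Finset.univ
  rw [Finset.prod_const, Finset.card_univ, Fintype.card_fin, ← pow_mul,
    coeff_one_add_X_pow'] at h
  rw [h]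
  exact Finset.sum_congr rfl fun l _ => Finset.prod_congr rfl fun i _ =>
    (coeff_one_add_X_pow' m (l i)).symm

lemma term_eq (d m : ℕ) (hd : 1 ≤ d) (hm : 1 ≤ m) :
    (d.descFactorial m : ℝ) / (m - 1).factorial = d * (d - 1).choose (m - 1) := by
  obtain ⟨e, rfl⟩ := Nat.exists_eq_add_of_le hm
  obtain ⟨c, rfl⟩ := Nat.exists_eq_add_of_le hd
  rw [show 1 + e = e + 1 by ring, show 1 + c = c + 1 by ring]
  simp only [Nat.succ_descFactorial_succ, Nat.add_sub_cancel,
    Nat.descFactorial_eq_factorial_mul_choose]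
  push_cast
  rw [mul_comm ((e.factorial : ℝ)), ← mul_assoc, mul_div_cancel_right₀ _ (by positivity : (e.factorial:ℝ) ≠ 0)]

/-- For `d ≥ 3` and `n ≥ 2`, the sum over degree sequences `δ` (with each `δ j ≥ 1`
and `∑ δ j = 2(n-1)`) of `∏ j (d)_{δ j} / (δ j - 1)!`, multiplied by `(n-2)!`,
equals `(n-2)! * d^n * C((d-1)n, n-2)`. -/
theorem degree_sequence_sum (d n : ℕ) (hd : 3 ≤ d) (hn : 2 ≤ n) :
    ((n - 2).factorial : ℝ) *
      ∑ᶠ δ : Fin n → ℕ,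
        (if (∀ j, 1 ≤ δ j) ∧ (∑ j, δ j = 2 * (n - 1)) then
          ∏ j, (d.descFactorial (δ j) : ℝ) / (δ j - 1).factorial
        else 0) =
      ((n - 2).factorial : ℝ) * d ^ n * ((d - 1) * n).choose (n - 2) := by
  rw [mul_assoc]
  congr 1
  set s := Fintype.piFinset fun _ : Fin n => Finset.range (2 * (n - 1) + 1) with hs
  have hsupp : Function.support (fun δ : Fin n → ℕ =>
      (if (∀ j, 1 ≤ δ j) ∧ (∑ j, δ j = 2 * (n - 1)) then
        ∏ j, (d.descFactorial (δ j) : ℝ) / (δ j - 1).factorial else 0)) ⊆ ↑s := by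
    intro δ hδ
    simp only [Function.mem_support] at hδ
    split_ifs at hδ with h
    · obtain ⟨h1, h2⟩ := h
      simp only [hs, Finset.mem_coe, Fintype.mem_piFinset, Finset.mem_range]
      intro j
      have : δ j ≤ ∑ i, δ i := Finset.single_le_sum (fun i _ => Nat.zero_le _) (Finset.mem_univ j)
      omega
    · exact absurd rfl hδ
  rw [finsum_eq_sum_of_support_subset _ hsupp, ← Finset.sum_filter]
  have hterm : ∀ δ ∈ s.filter (fun δ => (∀ j, 1 ≤ δ j) ∧ (∑ j, δ j = 2 * (n - 1))),
      ∏ j, (d.descFactorial (δ j) : ℝ) / (δ j - 1).factorial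
        = (d : ℝ) ^ n * ∏ j, ((d - 1).choose (δ j - 1) : ℝ) := by
    intro δ hδ
    rw [Finset.mem_filter] at hδ
    obtain ⟨_, h1, _⟩ := hδ
    rw [show (d:ℝ) ^ n = ∏ _j : Fin n, (d:ℝ) by simp, ← Finset.prod_mul_distrib]
    exact Finset.prod_congr rfl fun j _ => term_eq d (δ j) (by omega) (h1 j)
  rw [Finset.sum_congr rfl hterm, ← Finset.mul_sum]
  congr 1
  have key : ∑ δ ∈ s.filter (fun δ => (∀ j, 1 ≤ δ j) ∧ (∑ j, δ j = 2 * (n - 1))),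
      ∏ j, ((d - 1).choose (δ j - 1)) = ((d - 1) * n).choose (n - 2) := by
    rw [← vander (d - 1) n (n - 2)]
    apply Finset.sum_nbij' (i := fun δ => Finsupp.equivFunOnFinite.symm (fun j => δ j - 1))
      (j := fun l => fun j => l j + 1)
    · intro δ hδ
      rw [Finset.mem_filter] at hδ
      obtain ⟨_, h1, h2⟩ := hδ
      rw [Finset.mem_finsuppAntidiag]
      refine ⟨?_, Finset.subset_univ _⟩
      have : ∑ j, (δ j - 1) = (∑ j, δ j) - ∑ _j : Fin n, 1 :=
        (Finset.sum_tsub_distrib _ (fun i _ => h1 i)).symm ▸ rfl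
      simp only [Finsupp.coe_equivFunOnFinite_symm]
      rw [this, h2]
      simp
      omega
    · intro l hl
      rw [Finset.mem_finsuppAntidiag] at hl
      obtain ⟨hsum, -⟩ := hl
      have hle : ∀ j, l j ≤ n - 2 := fun j => hsum ▸
        Finset.single_le_sum (f := fun i => l i) (fun i _ => Nat.zero_le _) (Finset.mem_univ j)
      rw [Finset.mem_filter]
      refine ⟨?_, fun j => Nat.le_add_left 1 (l j), ?_⟩
      · simp only [hs, Fintype.mem_piFinset, Finset.mem_range]
        intro j
        have := hle j; omega
      · rw [Finset.sum_add_distrib, hsum]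
        simp
        omega
    · intro δ hδ
      rw [Finset.mem_filter] at hδ
      funext j
      simp only [Finsupp.coe_equivFunOnFinite_symm]
      have := hδ.2.1 j
      omega
    · intro l hl
      ext j
      simp
    · intro δ hδ
      exact Finset.prod_congr rfl fun j _ => by
        simp [Finsupp.coe_equivFunOnFinite_symm]
  calc ∑ δ ∈ s.filter (fun δ => (∀ j, 1 ≤ δ j) ∧ (∑ j, δ j = 2 * (n - 1))),
        ∏ j, ((d - 1).choose (δ j - 1) : ℝ)
      = ((∑ δ ∈ s.filter (fun δ => (∀ j, 1 ≤ δ j) ∧ (∑ j, δ j = 2 * (n - 1))),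
          ∏ j, ((d - 1).choose (δ j - 1)) : ℕ) : ℝ) := by push_cast; rfl
    _ = _ := by rw [key]
end

section
/- Define, for 0 < β < 1 and d = 3, r_β = (8 - 4β - β² - √(β³(8+β)))/8 and f(z) = (1-z)^{-1/2} - 1. Then r_β ∈ (0,1) and β r_β f'(r_β) = f(r_β). -/
/-- For `d = 3`: with `r_β = (8 - 4β - β² - √(β³(8+β)))/8` and `f(z) = (1-z)^{-1/2} - 1`
(so `f'(z) = ½(1-z)^{-3/2}`), for every `β ∈ (0,1)` we have `r_β ∈ (0,1)` and the
saddle point equation `β r_β f'(r_β) = f(r_β)` holds. -/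
theorem saddle_point_equation (β : ℝ) (hβ0 : 0 < β) (hβ1 : β < 1)
    (r : ℝ) (hr : r = (8 - 4 * β - β ^ 2 - Real.sqrt (β ^ 3 * (8 + β))) / 8) :
    0 < r ∧ r < 1 ∧
      β * r * ((1 / 2) * (1 - r) ^ (-(3 / 2) : ℝ)) = (1 - r) ^ (-(1 / 2) : ℝ) - 1 := by
  have hs0 : 0 ≤ Real.sqrt (β ^ 3 * (8 + β)) := Real.sqrt_nonneg _
  set s := Real.sqrt (β ^ 3 * (8 + β)) with hsdef
  have hs2 : s ^ 2 = β ^ 3 * (8 + β) := Real.sq_sqrt (by positivity)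
  have hc : (0:ℝ) < 8 - 4 * β - β ^ 2 := by nlinarith
  have hslt : s < 8 - 4 * β - β ^ 2 := by nlinarith [hs2, hs0, sq_nonneg (s - (8 - 4*β - β^2))]
  have hr0 : 0 < r := by rw [hr]; linarith
  have hr1 : r < 1 := by rw [hr]; nlinarith [sq_nonneg β]
  have hu : (0:ℝ) < 1 - r := by linarith
  set w := Real.sqrt (1 - r) with hwdef
  have hw0 : 0 < w := Real.sqrt_pos.mpr hu
  have hw2 : w ^ 2 = 1 - r := Real.sq_sqrt hu.le
  have hkey2 : (2 * (1 - r) - β * r) ^ 2 = 4 * (1 - r) ^ 3 := by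
    rw [hr]
    linear_combination ((2 * (2 + β) ^ 2 - 3 * (4 * β + β ^ 2) - s) / 128) * hs2
  have hb0 : 0 < 2 * (1 - r) - β * r := by
    rw [hr]; nlinarith [hs0, mul_nonneg hβ0.le hs0]
  have ha0 : 0 < 2 * (1 - r) * w := by positivity
  have ha2 : (2 * (1 - r) * w) ^ 2 = (2 * (1 - r) - β * r) ^ 2 := by
    rw [hkey2]; linear_combination (4 * (1 - r) ^ 2) * hw2
  have hfac : (2 * (1 - r) * w - (2 * (1 - r) - β * r)) * (2 * (1 - r) * w + (2 * (1 - r) - β * r)) = 0 := by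
    linear_combination ha2
  have hAB : 2 * (1 - r) * w = 2 * (1 - r) - β * r := by
    rcases mul_eq_zero.mp hfac with h | h
    · linarith
    · exfalso; nlinarith
  refine ⟨hr0, hr1, ?_⟩
  have h1 : (1 - r) ^ (-(1 / 2) : ℝ) = w⁻¹ := by
    rw [← hw2, ← Real.rpow_natCast w 2, ← Real.rpow_mul hw0.le]
    rw [show ((2:ℕ):ℝ) * (-(1 / 2)) = -1 by push_cast; ring, Real.rpow_neg_one]
  have h3 : (1 - r) ^ (-(3 / 2) : ℝ) = (w ^ 3)⁻¹ := by
    rw [← hw2, ← Real.rpow_natCast w 2, ← Real.rpow_mul hw0.le]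
    rw [show ((2:ℕ):ℝ) * (-(3 / 2)) = ((-3 : ℤ) : ℝ) by push_cast; ring, Real.rpow_intCast]
    rw [zpow_neg]
    norm_cast
  have hE : β * r = 2 * w ^ 2 - 2 * w ^ 3 := by
    linear_combination hAB + (2 * w - 2) * hw2
  rw [h1, h3, hE]
  have hwne : w ≠ 0 := hw0.ne'
  field_simp
end

section
/- For d = 3, the function φ(β) = β log(2 f(r_β)) - log r_β - β log β - (1/2 - β) log(1/2 - β), with f(z) = (1-z)^{-1/2} - 1 and r_β = (8 - 4β - β² - √(β³(8+β)))/8, has a stationary point at β = 1/3, where φ(1/3) = log(4√(2/3)). -/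
/-- For `d = 3`, the function
`φ(β) = β log(2 f(r_β)) - log r_β - β log β - (1/2 - β) log(1/2 - β)`,
with `f(z) = (1-z)^{-1/2} - 1` and `r_β = (8 - 4β - β² - √(β³(8+β)))/8`,
has a stationary point at `β = 1/3`, where `φ(1/3) = log(4√(2/3))`. -/
theorem phi_stationary_point
    (r : ℝ → ℝ)
    (hr : ∀ β, r β = (8 - 4 * β - β ^ 2 - Real.sqrt (β ^ 3 * (8 + β))) / 8)
    (φ : ℝ → ℝ)
    (hφ : ∀ β, φ β = β * Real.log (2 * ((1 - r β) ^ (-(1 / 2) : ℝ) - 1))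
      - Real.log (r β) - β * Real.log β - (1 / 2 - β) * Real.log (1 / 2 - β)) :
    HasDerivAt φ 0 (1 / 3) ∧ φ (1 / 3) = Real.log (4 * Real.sqrt (2 / 3)) := by
  have hr13 : r (1/3) = 3/4 := by
    rw [hr]
    rw [show ((1:ℝ)/3) ^ 3 * (8 + 1/3) = (5/9)^2 by norm_num,
        Real.sqrt_sq (by norm_num : (0:ℝ) ≤ 5/9)]
    norm_num
  have hrpow : ∀ p : ℝ, ((1:ℝ)/4) ^ p = (2:ℝ) ^ (-2 * p) := by
    intro p
    rw [show (1/4:ℝ) = (2:ℝ) ^ (-2:ℝ) by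
        rw [show (-2:ℝ) = ((-2:ℤ):ℝ) by norm_num, Real.rpow_intCast]; norm_num,
      ← Real.rpow_mul (by norm_num)]
  have h1r : (1:ℝ) - r (1/3) = 1/4 := by rw [hr13]; norm_num
  have hg13 : ((1:ℝ) - r (1/3)) ^ (-(1/2):ℝ) = 2 := by
    rw [h1r, hrpow, show (-2:ℝ) * -(1/2) = 1 by norm_num, Real.rpow_one]
  have hg13' : ((1:ℝ) - r (1/3)) ^ ((-(1/2):ℝ) - 1) = 8 := by
    rw [h1r, hrpow, show (-2:ℝ) * (-(1/2) - 1) = ((3:ℕ):ℝ) by norm_num,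
      Real.rpow_natCast]
    norm_num
  -- derivative of the inner polynomial
  have hu : HasDerivAt (fun β : ℝ => β ^ 3 * (8 + β)) (76/27) (1/3) := by
    have h := (hasDerivAt_pow 3 ((1:ℝ)/3)).mul
      ((hasDerivAt_const ((1:ℝ)/3) (8:ℝ)).add (hasDerivAt_id _))
    refine h.congr_deriv ?_
    norm_num
  have hs : HasDerivAt (fun β : ℝ => Real.sqrt (β ^ 3 * (8 + β))) (38/15) (1/3) := by
    have h := hu.sqrt (by norm_num)
    convert h using 1
    rw [show ((1:ℝ)/3) ^ 3 * (8 + 1/3) = (5/9)^2 by norm_num,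
        Real.sqrt_sq (by norm_num : (0:ℝ) ≤ 5/9)]
    norm_num
  have hrd : HasDerivAt r (-(9/10)) (1/3) := by
    have h := ((((hasDerivAt_const ((1:ℝ)/3) (8:ℝ)).sub
      ((hasDerivAt_id ((1:ℝ)/3)).const_mul 4)).sub (hasDerivAt_pow 2 _)).sub hs).div_const 8
    rw [funext hr]
    refine h.congr_deriv ?_
    norm_num
  have hgd : HasDerivAt (fun β => (1 - r β) ^ (-(1/2):ℝ)) (-(18/5)) (1/3) := by
    have h := ((hasDerivAt_const ((1:ℝ)/3) (1:ℝ)).sub hrd).rpow_const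
      (p := -(1/2)) (Or.inl (by show (1:ℝ) - r (1/3) ≠ 0; rw [h1r]; norm_num))
    refine h.congr_deriv ?_
    simp only [Pi.sub_apply]
    rw [hg13']
    norm_num
  have h1 : HasDerivAt (fun β => β * Real.log (2 * ((1 - r β) ^ (-(1/2):ℝ) - 1)))
      (1 * Real.log (2 * (2 - 1)) + 1/3 * (2 * -(18/5) / (2 * (2 - 1)))) (1/3) := by
    have hne : 2 * (((1:ℝ) - r (1/3)) ^ (-(1/2):ℝ) - 1) ≠ 0 := by
      rw [hg13]; norm_num
    have h := (hasDerivAt_id ((1:ℝ)/3)).mul (((hgd.sub_const 1).const_mul 2).log hne)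
    rw [hg13] at h
    refine h.congr_deriv ?_
    rfl
  have h2 : HasDerivAt (fun β => Real.log (r β)) (-(9/10) / (3/4)) (1/3) := by
    have h := hrd.log (by rw [hr13]; norm_num)
    rwa [hr13] at h
  have h3 : HasDerivAt (fun β : ℝ => β * Real.log β) (Real.log (1/3) + 1) (1/3) := by
    have h := (hasDerivAt_id ((1:ℝ)/3)).mul (Real.hasDerivAt_log (by norm_num))
    refine h.congr_deriv ?_
    norm_num
  have h4 : HasDerivAt (fun β : ℝ => (1/2 - β) * Real.log (1/2 - β))
      (-Real.log (1/6) - 1) (1/3) := by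
    have hlin : HasDerivAt (fun β : ℝ => 1/2 - β) (-1) (1/3) := by
      exact ((hasDerivAt_const ((1:ℝ)/3) ((1:ℝ)/2)).sub (hasDerivAt_id _)).congr_deriv (by norm_num)
    have h := hlin.mul (hlin.log (by norm_num))
    refine h.congr_deriv ?_
    rw [show (1:ℝ)/2 - 1/3 = 1/6 by norm_num]
    rw [show (-1:ℝ)/(1/6) = -6 by norm_num]
    ring
  have l3 : Real.log ((1:ℝ)/3) = -Real.log 3 := by
    rw [show (1/3:ℝ) = 3⁻¹ by norm_num, Real.log_inv]
  have l6 : Real.log ((1:ℝ)/6) = -(Real.log 2 + Real.log 3) := by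
    rw [show (1/6:ℝ) = ((2:ℝ)*3)⁻¹ by norm_num, Real.log_inv,
      Real.log_mul (by norm_num) (by norm_num)]
  constructor
  · have hD := ((h1.sub h2).sub h3).sub h4
    have hφf : φ = fun β => β * Real.log (2 * ((1 - r β) ^ (-(1 / 2) : ℝ) - 1))
      - Real.log (r β) - β * Real.log β - (1 / 2 - β) * Real.log (1 / 2 - β) := funext hφ
    rw [hφf]
    refine hD.congr_deriv ?_
    rw [show (2:ℝ) * (2 - 1) = 2 by norm_num, l3, l6]
    ring
  · rw [hφ, hg13, hr13]
    rw [show (2:ℝ) * (2 - 1) = 2 by norm_num, show (1:ℝ)/2 - 1/3 = 1/6 by norm_num]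
    have l34 : Real.log ((3:ℝ)/4) = Real.log 3 - 2 * Real.log 2 := by
      rw [Real.log_div (by norm_num) (by norm_num), show (4:ℝ) = 2^2 by norm_num,
        Real.log_pow]
      push_cast; ring
    have l4 : Real.log (4 * Real.sqrt ((2:ℝ)/3))
        = 2 * Real.log 2 + Real.log ((2:ℝ)/3) / 2 := by
      rw [Real.log_mul (by norm_num) (Real.sqrt_pos.mpr (by norm_num)).ne',
        Real.log_sqrt (by norm_num), show (4:ℝ) = 2^2 by norm_num, Real.log_pow]
      push_cast; ring
    have l23 : Real.log ((2:ℝ)/3) = Real.log 2 - Real.log 3 :=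
      Real.log_div (by norm_num) (by norm_num)
    rw [l34, l4, l23, l3, l6]
    ring
end
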